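/- arXiv:2105.14087 — 3 statements merged into one kernel-verified Lean document; each statement's English description precedes it below -/
import Mathlib

section
/- Let φ : [0,∞) → [0,∞) be a bounded function and let A be a positive random variable such that for some p ∈ (0,1) and t₀ ≥ 0, φ(t) ≤ p·E[φ(A t)] for all t > t₀. If p·E[A^{-a}] < 1 for some a ∈ (0,∞), then there exists a constant C > 0 such that φ(t) ≤ C t^{-a} for all t > 0. -/
open MeasureTheory

/-- If a bounded nonnegative function `φ` satisfies `φ(t) ≤ p · E[φ(A t)]` for all `t > t₀`,
where `A` is a positive random variable, and `p · E[A^{-a}] < 1` for some `a > 0`, then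
`φ(t) = O(t^{-a})`, i.e. there is `C > 0` with `φ(t) ≤ C t^{-a}` for all `t > 0`. -/
theorem stmt_0 {Ω : Type*} [MeasurableSpace Ω] (μ : Measure Ω) [IsProbabilityMeasure μ]
    (φ : ℝ → ℝ) (A : Ω → ℝ) (p t₀ a : ℝ)
    (hφmeas : Measurable φ) (hφ0 : ∀ t, 0 ≤ φ t) (hφbdd : ∃ M, ∀ t, φ t ≤ M)
    (hA : Measurable A) (hApos : ∀ ω, 0 < A ω)
    (hp : 0 < p) (hp1 : p < 1) (ht₀ : 0 ≤ t₀)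
    (hineq : ∀ t > t₀, φ t ≤ p * ∫ ω, φ (A ω * t) ∂μ)
    (ha : 0 < a)
    (hint : Integrable (fun ω => (A ω) ^ (-a)) μ)
    (hcontr : p * ∫ ω, (A ω) ^ (-a) ∂μ < 1) :
    ∃ C > 0, ∀ t > 0, φ t ≤ C * t ^ (-a) := by
  obtain ⟨M, hM⟩ := hφbdd
  have hM0 : 0 ≤ M := le_trans (hφ0 0) (hM 0)
  set I : ℝ := ∫ ω, (A ω) ^ (-a) ∂μ with hI
  have hI0 : 0 ≤ I := integral_nonneg fun ω => Real.rpow_nonneg (hApos ω).le _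
  have hq0 : 0 ≤ p * I := mul_nonneg hp.le hI0
  have hq1 : p * I ≤ 1 := hcontr.le
  set D : ℝ := M * t₀ ^ a + 1 with hD
  have hDpos : 0 < D := by positivity
  -- integrability of the composed function
  have hφint : ∀ t : ℝ, Integrable (fun ω => φ (A ω * t)) μ := by
    intro t
    refine (integrable_const M).mono'
      ((hφmeas.comp (hA.mul_const t)).aestronglyMeasurable) ?_
    filter_upwards with ω
    rw [Real.norm_eq_abs, abs_of_nonneg (hφ0 _)]
    exact hM _
  -- the key induction
  have key : ∀ n : ℕ, ∀ t : ℝ, 0 < t → φ t ≤ p ^ n * M + D * t ^ (-a) := by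
    intro n
    induction n with
    | zero =>
      intro t ht
      have : 0 ≤ D * t ^ (-a) := mul_nonneg hDpos.le (Real.rpow_nonneg ht.le _)
      simpa using le_add_of_le_of_nonneg (hM t) this
    | succ n ih =>
      intro t ht
      rcases le_or_gt t t₀ with hcase | hcase
      · -- small t : use the trivial bound
        have ht₀pos : 0 < t₀ := lt_of_lt_of_le ht hcase
        have h2 : t₀ ^ (-a) ≤ t ^ (-a) :=
          Real.rpow_le_rpow_of_nonpos ht hcase (neg_nonpos.mpr ha.le)
        have h1 : t₀ ^ a * t₀ ^ (-a) = 1 := by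
          rw [← Real.rpow_add ht₀pos]; simp
        have hta : 0 ≤ t ^ (-a) := Real.rpow_nonneg ht.le _
        have h3 : φ t ≤ M * t₀ ^ a * t ^ (-a) := by
          calc φ t ≤ M := hM t
            _ = M * (t₀ ^ a * t₀ ^ (-a)) := by rw [h1]; ring
            _ = M * t₀ ^ a * t₀ ^ (-a) := by ring
            _ ≤ M * t₀ ^ a * t ^ (-a) :=
                mul_le_mul_of_nonneg_left h2 (by positivity)
        have h4 : M * t₀ ^ a * t ^ (-a) ≤ D * t ^ (-a) := by
          apply mul_le_mul_of_nonneg_right _ hta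
          simp only [hD]; linarith
        have h5 : 0 ≤ p ^ (n + 1) * M := by positivity
        linarith
      · -- large t : iterate
        have hstep := hineq t hcase
        have hbound : ∀ ω, φ (A ω * t) ≤
            p ^ n * M + (D * t ^ (-a)) * (A ω) ^ (-a) := by
          intro ω
          have hAt : 0 < A ω * t := mul_pos (hApos ω) ht
          have := ih (A ω * t) hAt
          rwa [Real.mul_rpow (hApos ω).le ht.le, show D * ((A ω) ^ (-a) * t ^ (-a))
            = p ^ n * 0 + (D * t ^ (-a)) * (A ω) ^ (-a) by ring, mul_zero, zero_add]
            at this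
        have hintg : Integrable
            (fun ω => p ^ n * M + (D * t ^ (-a)) * (A ω) ^ (-a)) μ :=
          (integrable_const _).add (hint.const_mul _)
        have hmono : (∫ ω, φ (A ω * t) ∂μ) ≤
            ∫ ω, (p ^ n * M + (D * t ^ (-a)) * (A ω) ^ (-a)) ∂μ :=
          integral_mono (hφint t) hintg hbound
        have hcalc : (∫ ω, (p ^ n * M + (D * t ^ (-a)) * (A ω) ^ (-a)) ∂μ)
            = p ^ n * M + (D * t ^ (-a)) * I := by
          rw [integral_add (integrable_const _) (hint.const_mul _),
            integral_const, integral_const_mul]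
          simp [hI]
        have h3 : φ t ≤ p * (p ^ n * M + (D * t ^ (-a)) * I) := by
          calc φ t ≤ p * ∫ ω, φ (A ω * t) ∂μ := hstep
            _ ≤ p * (p ^ n * M + (D * t ^ (-a)) * I) := by
                rw [← hcalc]; exact mul_le_mul_of_nonneg_left hmono hp.le
        have hta : 0 ≤ t ^ (-a) := Real.rpow_nonneg ht.le _
        calc φ t ≤ p * (p ^ n * M + (D * t ^ (-a)) * I) := h3
          _ = p ^ (n + 1) * M + (D * t ^ (-a)) * (p * I) := by ring
          _ ≤ p ^ (n + 1) * M + (D * t ^ (-a)) * 1 := by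
              have : 0 ≤ D * t ^ (-a) := mul_nonneg hDpos.le hta
              nlinarith
          _ = p ^ (n + 1) * M + D * t ^ (-a) := by ring
  -- let n → ∞
  refine ⟨D, hDpos, fun t ht => ?_⟩
  have hlim : Filter.Tendsto (fun n : ℕ => p ^ n * M + D * t ^ (-a))
      Filter.atTop (nhds (0 * M + D * t ^ (-a))) := by
    exact (((tendsto_pow_atTop_nhds_zero_of_lt_one hp.le hp1).mul_const M).add
      tendsto_const_nhds)
  have := ge_of_tendsto' hlim (fun n => key n t ht)
  linarith [this]
end

section
/- Let f : ℕ → (0,∞) satisfy f(i) ≥ f_* > 0 and f(i) ≤ C₀ i^α for all i ≥ 1, where α ∈ (0,1/2] and C₀ > 0. Fix Λ > 0. Then there exists a constant C₁ > 0 (depending on f_*, Λ, C₀, α) such that for all θ ∈ (0, Λ], μ̂(θ) := Σ_{k=1}^{∞} ∏_{i=1}^{k} f(i)/(θ + f(i)) ≤ Σ_{k=1}^{∞} exp(-C₁ θ k^{1-α}). -/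
open Real

/-- Summability of a stretched-exponential series. -/
lemma aux_summable_stretched {c p : ℝ} (hc : 0 < c) (hp : 1 / 2 ≤ p) :
    Summable fun k : ℕ => Real.exp (-(c * ((k : ℝ) + 1) ^ p)) := by
  have hbound : Summable fun k : ℕ => (24 / c ^ 4) * ((k : ℝ) + 1) ^ (-2 : ℝ) := by
    apply Summable.mul_left
    have h : Summable fun n : ℕ => (n : ℝ) ^ (-2 : ℝ) :=
      Real.summable_nat_rpow.mpr (by norm_num)
    have := (summable_nat_add_iff 1).mpr h
    refine this.congr fun n => ?_
    push_cast
    ring_nf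
  refine Summable.of_nonneg_of_le (fun k => (Real.exp_pos _).le) (fun k => ?_) hbound
  set x : ℝ := (k : ℝ) + 1 with hxdef
  have hx1 : (1 : ℝ) ≤ x := le_add_of_nonneg_left (Nat.cast_nonneg k)
  have hx0 : (0 : ℝ) < x := by linarith
  have hxp : (0 : ℝ) < x ^ p := Real.rpow_pos_of_pos hx0 p
  have hcx : (0 : ℝ) ≤ c * x ^ p := by positivity
  have hkey : (c * x ^ p) ^ 4 / 24 ≤ Real.exp (c * x ^ p) := by
    have hsum := Real.sum_le_exp_of_nonneg hcx 5
    have hsingle : (c * x ^ p) ^ 4 / (Nat.factorial 4 : ℝ) ≤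
        ∑ i ∈ Finset.range 5, (c * x ^ p) ^ i / (Nat.factorial i : ℝ) := by
      apply Finset.single_le_sum (f := fun i => (c * x ^ p) ^ i / (Nat.factorial i : ℝ))
      · intro i _
        positivity
      · simp
    simpa [Nat.factorial] using hsingle.trans hsum
  have hpow : (0 : ℝ) < (c * x ^ p) ^ 4 / 24 := by positivity
  have h1 : Real.exp (-(c * x ^ p)) ≤ ((c * x ^ p) ^ 4 / 24)⁻¹ := by
    rw [Real.exp_neg]
    exact inv_anti₀ hpow hkey
  have h2 : ((c * x ^ p) ^ 4 / 24)⁻¹ = 24 / (c ^ 4 * x ^ (p * 4)) := by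
    rw [mul_pow, ← Real.rpow_natCast (x ^ p) 4, ← Real.rpow_mul hx0.le]
    push_cast
    field_simp
  have h3 : x ^ (2 : ℝ) ≤ x ^ (p * 4) :=
    Real.rpow_le_rpow_of_exponent_le hx1 (by linarith)
  have h4 : 24 / (c ^ 4 * x ^ (p * 4)) ≤ 24 / (c ^ 4 * x ^ (2 : ℝ)) := by
    gcongr
  have h5 : 24 / (c ^ 4 * x ^ (2 : ℝ)) = 24 / c ^ 4 * x ^ (-2 : ℝ) := by
    rw [Real.rpow_neg hx0.le]
    field_simp
  calc Real.exp (-(c * x ^ p)) ≤ ((c * x ^ p) ^ 4 / 24)⁻¹ := h1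
    _ = 24 / (c ^ 4 * x ^ (p * 4)) := h2
    _ ≤ 24 / (c ^ 4 * x ^ (2 : ℝ)) := h4
    _ = 24 / c ^ 4 * x ^ (-2 : ℝ) := h5
/-- If `f_* ≤ f(i) ≤ C₀ i^α` with `α ∈ (0,1/2]`, then there is `C₁ > 0` so that for all
`θ ∈ (0, Λ]`, `μ̂(θ) = Σ_{k≥1} ∏_{i=1}^k f(i)/(θ+f(i)) ≤ Σ_{k≥1} exp(-C₁ θ k^{1-α})`. -/
theorem stmt_4 (f : ℕ → ℝ) (fstar C₀ α Λ : ℝ)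
    (hfstar : 0 < fstar) (hf : ∀ i, fstar ≤ f i)
    (hα0 : 0 < α) (hα : α ≤ 1 / 2) (hC₀ : 0 < C₀)
    (hub : ∀ i : ℕ, 1 ≤ i → f i ≤ C₀ * (i : ℝ) ^ α)
    (hΛ : 0 < Λ) :
    ∃ C₁ > 0, ∀ θ : ℝ, 0 < θ → θ ≤ Λ →
      (∑' k : ℕ, ∏ i ∈ Finset.Icc 1 (k + 1), f i / (θ + f i))
        ≤ ∑' k : ℕ, Real.exp (-C₁ * θ * ((k : ℝ) + 1) ^ (1 - α)) := by
  have hΛC : (0 : ℝ) < Λ + C₀ := by linarith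
  refine ⟨1 / (Λ + C₀), by positivity, fun θ hθ hθΛ => ?_⟩
  set C₁ : ℝ := 1 / (Λ + C₀) with hC₁def
  have hC₁ : 0 < C₁ := by positivity
  have hterm : ∀ k : ℕ, ∏ i ∈ Finset.Icc 1 (k + 1), f i / (θ + f i)
      ≤ Real.exp (-C₁ * θ * ((k : ℝ) + 1) ^ (1 - α)) := by
    intro k
    have hk1 : (1 : ℝ) ≤ (k : ℝ) + 1 := le_add_of_nonneg_left (Nat.cast_nonneg k)
    have hk0 : (0 : ℝ) < (k : ℝ) + 1 := by linarith
    have hka : (1 : ℝ) ≤ ((k : ℝ) + 1) ^ α := Real.one_le_rpow hk1 hα0.le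
    have hkap : (0 : ℝ) < ((k : ℝ) + 1) ^ α := by linarith
    set B : ℝ := (Λ + C₀) * ((k : ℝ) + 1) ^ α with hBdef
    have hB0 : 0 < B := by positivity
    have hfac : ∀ i ∈ Finset.Icc 1 (k + 1), f i / (θ + f i) ≤ Real.exp (-(θ / B)) := by
      intro i hi
      simp only [Finset.mem_Icc] at hi
      have hfi : 0 < f i := lt_of_lt_of_le hfstar (hf i)
      have hθf : 0 < θ + f i := by linarith
      have hupper : θ + f i ≤ B := by
        have h1 : f i ≤ C₀ * (i : ℝ) ^ α := hub i hi.1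
        have h2 : (i : ℝ) ^ α ≤ ((k : ℝ) + 1) ^ α := by
          apply Real.rpow_le_rpow (Nat.cast_nonneg i) _ hα0.le
          exact_mod_cast hi.2
        have h3 : Λ ≤ Λ * ((k : ℝ) + 1) ^ α := le_mul_of_one_le_right hΛ.le hka
        have h4 : C₀ * (i : ℝ) ^ α ≤ C₀ * ((k : ℝ) + 1) ^ α :=
          mul_le_mul_of_nonneg_left h2 hC₀.le
        calc θ + f i ≤ Λ + C₀ * (i : ℝ) ^ α := add_le_add hθΛ h1
          _ ≤ Λ * ((k : ℝ) + 1) ^ α + C₀ * ((k : ℝ) + 1) ^ α := add_le_add h3 h4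
          _ = B := by rw [hBdef]; ring
      have hA : f i / (θ + f i) ≤ Real.exp (f i / (θ + f i) - 1) := by
        have := Real.add_one_le_exp (f i / (θ + f i) - 1)
        linarith
      have hEq : f i / (θ + f i) - 1 = -(θ / (θ + f i)) := by field_simp; ring
      have hB' : -(θ / (θ + f i)) ≤ -(θ / B) := by
        rw [neg_le_neg_iff]
        gcongr
      calc f i / (θ + f i) ≤ Real.exp (f i / (θ + f i) - 1) := hA
        _ = Real.exp (-(θ / (θ + f i))) := by rw [hEq]
        _ ≤ Real.exp (-(θ / B)) := Real.exp_le_exp.mpr hB'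
    have hprod : ∏ i ∈ Finset.Icc 1 (k + 1), f i / (θ + f i)
        ≤ ∏ i ∈ Finset.Icc 1 (k + 1), Real.exp (-(θ / B)) := by
      apply Finset.prod_le_prod _ hfac
      intro i _
      have hfi : 0 < f i := lt_of_lt_of_le hfstar (hf i)
      positivity
    have hcard : ∏ i ∈ Finset.Icc 1 (k + 1), Real.exp (-(θ / B))
        = Real.exp (((k : ℝ) + 1) * (-(θ / B))) := by
      rw [Finset.prod_const, Nat.card_Icc]
      rw [← Real.exp_nat_mul]
      norm_num
    have hexparg : ((k : ℝ) + 1) * (-(θ / B)) = -C₁ * θ * ((k : ℝ) + 1) ^ (1 - α) := by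
      have hsub : ((k : ℝ) + 1) ^ (1 - α) = ((k : ℝ) + 1) / ((k : ℝ) + 1) ^ α := by
        rw [Real.rpow_sub hk0, Real.rpow_one]
      rw [hsub, hBdef, hC₁def]
      field_simp
    calc ∏ i ∈ Finset.Icc 1 (k + 1), f i / (θ + f i)
        ≤ ∏ i ∈ Finset.Icc 1 (k + 1), Real.exp (-(θ / B)) := hprod
      _ = Real.exp (((k : ℝ) + 1) * (-(θ / B))) := hcard
      _ = Real.exp (-C₁ * θ * ((k : ℝ) + 1) ^ (1 - α)) := by rw [hexparg]
  have hsum : Summable fun k : ℕ => Real.exp (-C₁ * θ * ((k : ℝ) + 1) ^ (1 - α)) := by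
    have h := aux_summable_stretched (c := C₁ * θ) (p := 1 - α) (by positivity) (by linarith)
    refine h.congr fun k => ?_
    ring_nf
  have hLHS : Summable fun k : ℕ => ∏ i ∈ Finset.Icc 1 (k + 1), f i / (θ + f i) := by
    refine Summable.of_nonneg_of_le (fun k => ?_) hterm hsum
    apply Finset.prod_nonneg
    intro i _
    have hfi : 0 < f i := lt_of_lt_of_le hfstar (hf i)
    positivity
  exact Summable.tsum_le_tsum hterm hLHS hsum
end

section
/- Fix an integer m ≥ 1 and β ≥ 0, and let i₀ ≥ 1 be an integer with (m+β)/((2m+β)i₀ + β) ≤ 1/2. Then there exists a constant C > 0 such that for every integer K > i₀, ∏_{i=i₀}^{K-1} (1 − (m+β)/((2m+β)i + β))^m ≥ C · K^{-m(m+β)/(2m+β)}. -/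
open Finset Real

theorem tele (c : ℝ) (hc : 0 ≤ c) (n K : ℕ) (hn : 1 ≤ n) (hK : n < K) :
    ∏ i ∈ Finset.Ico (n+1) K, (((i:ℝ) - 1 + c)/((i:ℝ) + c)) = ((n:ℝ)+c)/((K:ℝ)-1+c) := by
  induction K, hK using Nat.le_induction with
  | base =>
    simp only [Finset.Ico_self, Finset.prod_empty]
    have h : ((n:ℝ) + 1 - 1 + c) = (n:ℝ) + c := by ring
    push_cast
    rw [h, div_self]
    have : (1:ℝ) ≤ (n:ℝ) := by exact_mod_cast hn
    positivity
  | succ K hK ih =>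
    rw [Finset.prod_Ico_succ_top (by omega), ih]
    have h1 : (0:ℝ) < (K:ℝ) - 1 + c := by
      have : (2:ℝ) ≤ (K:ℝ) := by exact_mod_cast (by omega : 2 ≤ K)
      nlinarith
    push_cast
    field_simp
    ring

/-- Product lower bound in the linear preferential attachment model: for `m ≥ 1`, `β ≥ 0`
and `i₀` with `(m+β)/((2m+β)i₀+β) ≤ 1/2`, there is `C > 0` such that for all `K > i₀`,
`∏_{i=i₀}^{K-1} (1 − (m+β)/((2m+β)i+β))^m ≥ C K^{-m(m+β)/(2m+β)}`. -/
theorem stmt_10 (m : ℕ) (hm : 1 ≤ m) (β : ℝ) (hβ : 0 ≤ β)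
    (i₀ : ℕ) (hi₀ : 1 ≤ i₀)
    (hhalf : ((m : ℝ) + β) / ((2 * m + β) * i₀ + β) ≤ 1 / 2) :
    ∃ C > 0, ∀ K : ℕ, i₀ < K →
      C * (K : ℝ) ^ (-((m : ℝ) * ((m : ℝ) + β) / (2 * (m : ℝ) + β)))
        ≤ ∏ i ∈ Finset.Ico i₀ K,
            (1 - ((m : ℝ) + β) / ((2 * (m : ℝ) + β) * (i : ℝ) + β)) ^ m := by
  have hm1 : (1:ℝ) ≤ (m:ℝ) := by exact_mod_cast hm
  set d : ℝ := 2 * (m:ℝ) + β with hd_def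
  have hd : 0 < d := by positivity
  set c : ℝ := β / d with hc_def
  set a : ℝ := ((m:ℝ) + β) / d with ha_def
  have hc : 0 ≤ c := by positivity
  have ha : 0 < a := by positivity
  have ha1 : a ≤ 1 := by
    rw [ha_def, div_le_one hd]; linarith
  -- rewrite each term
  have hterm : ∀ i : ℕ, ((m:ℝ) + β) / ((2 * (m:ℝ) + β) * (i:ℝ) + β) = a / ((i:ℝ) + c) := by
    intro i
    have h : (2 * (m:ℝ) + β) * (i:ℝ) + β = d * ((i:ℝ) + c) := by
      rw [hc_def]; field_simp; ring
    rw [h, ha_def, div_div]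
  have hi₀1 : (1:ℝ) ≤ (i₀:ℝ) := by exact_mod_cast hi₀
  have hi₀c : 0 < (i₀:ℝ) + c := by linarith
  -- hhalf in new form
  have hhalf' : a / ((i₀:ℝ) + c) ≤ 1 / 2 := by
    rw [← hterm i₀]; exact hhalf
  -- each term nonneg for i ≥ i₀
  have htnn : ∀ i : ℕ, i₀ ≤ i → 0 ≤ 1 - a / ((i:ℝ) + c) := by
    intro i hi
    have hii : (i₀:ℝ) ≤ (i:ℝ) := by exact_mod_cast hi
    have : a / ((i:ℝ) + c) ≤ a / ((i₀:ℝ) + c) := by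
      apply div_le_div_of_nonneg_left ha.le hi₀c
      linarith
    linarith [hhalf']
  set C₀ : ℝ := (1/2) * (((i₀:ℝ)+c)/(1+c)) ^ a with hC₀
  have hC₀pos : 0 < C₀ := by
    have : 0 < ((i₀:ℝ)+c)/(1+c) := by positivity
    positivity
  refine ⟨C₀ ^ m, by positivity, ?_⟩
  intro K hK
  have hKr : (2:ℝ) ≤ (K:ℝ) := by exact_mod_cast (by omega : 2 ≤ K)
  -- key product bound (without power m)
  have key : C₀ * (K:ℝ) ^ (-a) ≤ ∏ i ∈ Finset.Ico i₀ K, (1 - a / ((i:ℝ) + c)) := by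
    rw [Finset.prod_eq_prod_Ico_succ_bot hK]
    have step1 : ∏ i ∈ Finset.Ico (i₀+1) K, (((i:ℝ) - 1 + c)/((i:ℝ) + c)) ^ a
        ≤ ∏ i ∈ Finset.Ico (i₀+1) K, (1 - a / ((i:ℝ) + c)) := by
      apply Finset.prod_le_prod
      · intro i hi
        simp only [Finset.mem_Ico] at hi
        have h2 : (2:ℝ) ≤ (i:ℝ) := by exact_mod_cast (by omega : 2 ≤ i)
        have hpos : (0:ℝ) < (i:ℝ) - 1 + c := by linarith
        positivity
      · intro i hi
        simp only [Finset.mem_Ico] at hi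
        have h2 : (2:ℝ) ≤ (i:ℝ) := by exact_mod_cast (by omega : 2 ≤ i)
        have hic : (0:ℝ) < (i:ℝ) + c := by linarith
        have hb := rpow_one_add_le_one_add_mul_self
          (s := -(1/((i:ℝ)+c))) (p := a)
          (by rw [neg_le, neg_neg]; rw [div_le_one hic]; linarith) ha.le ha1
        have he : (1 + -(1/((i:ℝ)+c))) = ((i:ℝ) - 1 + c)/((i:ℝ) + c) := by
          field_simp
          ring
        rw [he] at hb
        calc (((i:ℝ) - 1 + c)/((i:ℝ) + c)) ^ a ≤ 1 + a * -(1/((i:ℝ)+c)) := hb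
          _ = 1 - a / ((i:ℝ) + c) := by ring
    have step2 : ∏ i ∈ Finset.Ico (i₀+1) K, (((i:ℝ) - 1 + c)/((i:ℝ) + c)) ^ a
        = (((i₀:ℝ)+c)/((K:ℝ)-1+c)) ^ a := by
      rw [Real.finset_prod_rpow _ _ (fun i hi => by
        simp only [Finset.mem_Ico] at hi
        have h2 : (2:ℝ) ≤ (i:ℝ) := by exact_mod_cast (by omega : 2 ≤ i)
        have hpos : (0:ℝ) < (i:ℝ) - 1 + c := by linarith
        positivity)]
      rw [tele c hc i₀ K hi₀ hK]
    have step3 : (((i₀:ℝ)+c)/(1+c)) ^ a * (K:ℝ) ^ (-a)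
        ≤ (((i₀:ℝ)+c)/((K:ℝ)-1+c)) ^ a := by
      have hrw : (((i₀:ℝ)+c)/(1+c)) ^ a * (K:ℝ) ^ (-a)
          = (((i₀:ℝ)+c)/((1+c)*(K:ℝ))) ^ a := by
        rw [Real.rpow_neg (by positivity), ← Real.inv_rpow (by positivity),
          ← Real.mul_rpow (by positivity) (by positivity)]
        congr 1
        field_simp
      rw [hrw]
      apply Real.rpow_le_rpow (by positivity) _ ha.le
      have h0 : (0:ℝ) < (K:ℝ) - 1 + c := by linarith
      have hden : (K:ℝ) - 1 + c ≤ (1+c) * (K:ℝ) := by nlinarith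
      exact div_le_div_of_nonneg_left (by positivity) h0 hden
    have hfirst : (1:ℝ)/2 ≤ 1 - a / ((i₀:ℝ) + c) := by linarith [hhalf']
    calc C₀ * (K:ℝ) ^ (-a)
        = (1/2) * ((((i₀:ℝ)+c)/(1+c)) ^ a * (K:ℝ) ^ (-a)) := by rw [hC₀]; ring
      _ ≤ (1 - a / ((i₀:ℝ) + c)) * ∏ i ∈ Finset.Ico (i₀+1) K, (1 - a / ((i:ℝ) + c)) := by
          apply mul_le_mul hfirst (le_trans step3 (step2 ▸ step1)) (by positivity)
          linarith [htnn i₀ le_rfl]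
  -- now raise to power m
  have hrw2 : ∏ i ∈ Finset.Ico i₀ K,
      (1 - ((m:ℝ) + β) / ((2 * (m:ℝ) + β) * (i:ℝ) + β)) ^ m
      = (∏ i ∈ Finset.Ico i₀ K, (1 - a / ((i:ℝ) + c))) ^ m := by
    rw [← Finset.prod_pow]
    apply Finset.prod_congr rfl
    intro i _
    rw [hterm i]
  rw [hrw2]
  have h1 : ((K:ℝ) ^ (-a)) ^ m = (K:ℝ) ^ (-((m:ℝ) * ((m:ℝ)+β) / (2*(m:ℝ)+β))) := by
    rw [← Real.rpow_natCast ((K:ℝ) ^ (-a)) m, ← Real.rpow_mul (Nat.cast_nonneg K)]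
    congr 1
    rw [ha_def, hd_def]
    ring
  calc C₀ ^ m * (K:ℝ) ^ (-((m:ℝ) * ((m:ℝ)+β) / (2*(m:ℝ)+β)))
      = C₀ ^ m * ((K:ℝ) ^ (-a)) ^ m := by rw [h1]
    _ = (C₀ * (K:ℝ) ^ (-a)) ^ m := (mul_pow _ _ _).symm
    _ ≤ _ := pow_le_pow_left₀ (by positivity) key m
end
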